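/- Let T be a strongly continuous semigroup on a Hilbert space H and C ∈ L(H, Y). For a fixed time horizon T₀ > 0 and input u ∈ L²(0, T₀; U), let x_γ(t) = T_t(γ x₀) + Φ_t u be the mild solution of ẋ = Ax + Bu with initial condition γ x₀, where Φ_t u = ∫₀^t T_{t-s} B u(s) ds. If x₀ belongs to the unobservable subspace U∞, then for every γ ∈ ℂ and t ∈ [0, T₀], ‖C x_γ(t)‖² = ‖C Φ_t u‖². Consequently, in the cost J(γ x₀, u) = ∫₀^{T₀} ‖C x_γ(t)‖² + ‖K u(t)‖² + 2Re⟨z, x_γ(t)⟩ + 2Re⟨v, u(t)⟩ dt, all terms depending on u are independent of γ, and hence the optimal control satisfies u*_{T₀}(·, γ x₀) = u*_{T₀}(·, x₀) for all γ ∈ ℂ. -/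

import Mathlib

open MeasureTheory intervalIntegral Set Filter Topology

local notation "⟪" x ", " y "⟫" => @inner ℂ _ _ x y

noncomputable section

variable {H U Y : Type*}
  [NormedAddCommGroup H] [InnerProductSpace ℂ H] [CompleteSpace H]
  [NormedAddCommGroup U] [InnerProductSpace ℂ U] [CompleteSpace U]
  [NormedAddCommGroup Y] [InnerProductSpace ℂ Y] [CompleteSpace Y]

/-- The input-to-state map `Φ_t u = ∫₀ᵗ T_{t-s} B u(s) ds`. -/
def inputMap (T : ℝ → H →L[ℂ] H) (B : U →L[ℂ] H) (u : ℝ → U) (t : ℝ) : H :=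
  ∫ s in (0:ℝ)..t, T (t - s) (B (u s))

/-- The mild solution `x(t) = T_t x₀ + Φ_t u` of `ẋ = Ax + Bu`, `x(0) = x₀`. -/
def traj (T : ℝ → H →L[ℂ] H) (B : U →L[ℂ] H) (x₀ : H) (u : ℝ → U) (t : ℝ) : H :=
  T t x₀ + inputMap T B u t

/-- The finite-horizon generalized LQ cost. -/
def costGLQ (T : ℝ → H →L[ℂ] H) (B : U →L[ℂ] H) (C : H →L[ℂ] Y) (K : U →L[ℂ] U)
    (z : H) (v : U) (T₀ : ℝ) (x₀ : H) (u : ℝ → U) : ℝ :=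
  ∫ t in (0:ℝ)..T₀,
    (‖C (traj T B x₀ u t)‖ ^ 2 + ‖K (u t)‖ ^ 2
      + 2 * (⟪z, traj T B x₀ u t⟫).re + 2 * (⟪v, u t⟫).re)

/-- Banach–Steinhaus bound on compact time intervals. -/
lemma exists_bound_aux (T : ℝ → H →L[ℂ] H) (hTcont : ∀ x : H, Continuous fun t : ℝ => T t x)
    (a b : ℝ) : ∃ M : ℝ, 0 ≤ M ∧ ∀ t ∈ Icc a b, ‖T t‖ ≤ M := by
  have h : ∀ x : H, ∃ C, ∀ i : Icc a b, ‖T (i : ℝ) x‖ ≤ C := by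
    intro x
    obtain ⟨C, hC⟩ := isCompact_Icc.exists_bound_of_continuousOn (hTcont x).continuousOn
    exact ⟨C, fun i => hC i i.2⟩
  obtain ⟨C', hC'⟩ := banach_steinhaus (g := fun i : Icc a b => T (i : ℝ)) h
  exact ⟨max C' 0, le_max_right _ _, fun t ht => le_trans (hC' ⟨t, ht⟩) (le_max_left _ _)⟩

/-- Strong continuity + uniform bound gives continuity of `a ↦ T a (g a)`. -/
lemma continuousOn_apply_family (T : ℝ → H →L[ℂ] H)
    (hTcont : ∀ x : H, Continuous fun t : ℝ => T t x)
    {s : Set ℝ} {M : ℝ} (hM : ∀ a ∈ s, ‖T a‖ ≤ M)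
    {g : ℝ → H} (hg : Continuous g) :
    ContinuousOn (fun a => T a (g a)) s := by
  intro a₀ ha₀
  have h2 : Tendsto (fun a => T a (g a₀)) (𝓝[s] a₀) (𝓝 (T a₀ (g a₀))) :=
    ((hTcont (g a₀)).tendsto a₀).mono_left nhdsWithin_le_nhds
  have h1 : Tendsto (fun a => T a (g a) - T a (g a₀)) (𝓝[s] a₀) (𝓝 0) := by
    apply squeeze_zero_norm' (a := fun a => M * ‖g a - g a₀‖)
    · filter_upwards [self_mem_nhdsWithin] with a ha
      calc ‖T a (g a) - T a (g a₀)‖ = ‖T a (g a - g a₀)‖ := by rw [map_sub]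
        _ ≤ M * ‖g a - g a₀‖ := (T a).le_of_opNorm_le (hM a ha) _
    · have : Tendsto (fun a => M * ‖g a - g a₀‖) (𝓝 a₀) (𝓝 (M * ‖g a₀ - g a₀‖)) :=
        (continuous_const.mul ((hg.sub continuous_const).norm)).tendsto a₀
      simpa using this.mono_left nhdsWithin_le_nhds
  have h := h1.add h2
  rw [zero_add] at h
  exact (by simpa using h : Tendsto (fun x => (T x) (g x)) (𝓝[s] a₀) (𝓝 ((T a₀) (g a₀))))

lemma continuousOn_inputMap (T : ℝ → H →L[ℂ] H)
    (hTcont : ∀ x : H, Continuous fun t : ℝ => T t x)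
    (B : U →L[ℂ] H) {u : ℝ → U} (hu : Continuous u) (T₀ : ℝ) (hT₀ : 0 < T₀) :
    ContinuousOn (inputMap T B u) (Icc 0 T₀) := by
  obtain ⟨M, hM0, hM⟩ := exists_bound_aux T hTcont (-T₀) T₀
  obtain ⟨Ku, hKu⟩ := isCompact_Icc.exists_bound_of_continuousOn
    (f := fun s => B (u s)) (s := Icc (0:ℝ) T₀) (B.continuous.comp hu).continuousOn
  have hKu0 : 0 ≤ Ku := le_trans (norm_nonneg _) (hKu 0 ⟨le_rfl, hT₀.le⟩)
  -- the integrand is continuous on [0,T₀] for fixed t ∈ [0,T₀]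
  have hint : ∀ t ∈ Icc (0:ℝ) T₀, ContinuousOn (fun s => T (t - s) (B (u s))) (Icc 0 T₀) := by
    intro t ht
    apply continuousOn_apply_family (fun s => T (t - s))
      (fun x => (hTcont x).comp (continuous_const.sub continuous_id))
      (fun s hs => hM (t - s) ⟨by cases ht; cases hs; linarith, by cases ht; cases hs; linarith⟩)
      (B.continuous.comp hu)
  intro t₀ ht₀
  have hII : ∀ t ∈ Icc (0:ℝ) T₀, ∀ a ∈ Icc (0:ℝ) T₀, ∀ b ∈ Icc (0:ℝ) T₀,
      IntervalIntegrable (fun s => T (t - s) (B (u s))) volume a b := by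
    intro t ht a ha b hb
    exact ((hint t ht).mono (uIcc_subset_Icc ha hb)).intervalIntegrable
  have hsplit : ∀ᶠ t in 𝓝[Icc (0:ℝ) T₀] t₀,
      inputMap T B u t = (∫ s in (0:ℝ)..t₀, T (t - s) (B (u s)))
        + ∫ s in t₀..t, T (t - s) (B (u s)) := by
    filter_upwards [self_mem_nhdsWithin] with t ht
    rw [inputMap, intervalIntegral.integral_add_adjacent_intervals
      (hII t ht 0 ⟨le_rfl, hT₀.le⟩ t₀ ht₀) (hII t ht t₀ ht₀ t ht)]
  have hterm1 : Tendsto (fun t => ∫ s in (0:ℝ)..t₀, T (t - s) (B (u s)))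
      (𝓝[Icc (0:ℝ) T₀] t₀) (𝓝 (inputMap T B u t₀)) := by
    have h0t₀ : (0:ℝ) ≤ t₀ := ht₀.1
    simp only [inputMap, intervalIntegral.integral_of_le h0t₀]
    apply MeasureTheory.tendsto_integral_filter_of_dominated_convergence (fun _ => M * Ku)
    · filter_upwards [self_mem_nhdsWithin] with t ht
      exact ((hint t ht).mono (Ioc_subset_Icc_self.trans
        (Icc_subset_Icc le_rfl ht₀.2))).aestronglyMeasurable measurableSet_Ioc
    · filter_upwards [self_mem_nhdsWithin] with t ht
      refine (ae_restrict_iff' measurableSet_Ioc).2 (ae_of_all _ fun s hs => ?_)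
      have hs' : s ∈ Icc (0:ℝ) T₀ := ⟨hs.1.le, hs.2.trans ht₀.2⟩
      calc ‖T (t - s) (B (u s))‖ ≤ M * ‖B (u s)‖ :=
            (T _).le_of_opNorm_le (hM _ ⟨by cases ht; cases hs'; linarith,
              by cases ht; cases hs'; linarith⟩) _
        _ ≤ M * Ku := mul_le_mul_of_nonneg_left (hKu s hs') hM0
    · exact integrableOn_const measure_Ioc_lt_top.ne
    · refine ae_of_all _ fun s => ?_
      exact (((hTcont (B (u s))).comp (continuous_id.sub continuous_const)).tendsto t₀).mono_left
        nhdsWithin_le_nhds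
  have hterm2 : Tendsto (fun t => ∫ s in t₀..t, T (t - s) (B (u s)))
      (𝓝[Icc (0:ℝ) T₀] t₀) (𝓝 0) := by
    apply squeeze_zero_norm' (a := fun t => (M * Ku) * |t - t₀|)
    · filter_upwards [self_mem_nhdsWithin] with t ht
      apply intervalIntegral.norm_integral_le_of_norm_le_const
      intro s hs
      have hs' : s ∈ Icc (0:ℝ) T₀ := (Ioc_subset_Icc_self.trans (uIcc_subset_Icc ht₀ ht)) hs
      calc ‖T (t - s) (B (u s))‖ ≤ M * ‖B (u s)‖ :=
            (T _).le_of_opNorm_le (hM _ ⟨by cases ht; cases hs'; linarith,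
              by cases ht; cases hs'; linarith⟩) _
        _ ≤ M * Ku := mul_le_mul_of_nonneg_left (hKu s hs') hM0
    · have : Tendsto (fun t => (M * Ku) * |t - t₀|) (𝓝 t₀) (𝓝 ((M * Ku) * |t₀ - t₀|)) :=
        (continuous_const.mul ((continuous_id.sub continuous_const).abs)).tendsto t₀
      simpa using this.mono_left nhdsWithin_le_nhds
  have h := hterm1.add hterm2
  rw [add_zero] at h
  exact h.congr' (hsplit.mono fun t ht => ht.symm)


lemma costGLQ_smul_eq (T : ℝ → H →L[ℂ] H)
    (hTcont : ∀ x : H, Continuous fun t : ℝ => T t x)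
    (B : U →L[ℂ] H) (C : H →L[ℂ] Y) (K : U →L[ℂ] U) (z : H) (v : U)
    (T₀ : ℝ) (hT₀ : 0 < T₀)
    (x₀ : H) (hx₀ : ∀ t : ℝ, 0 ≤ t → C (T t x₀) = 0) (γ : ℂ)
    {u : ℝ → U} (hu : Continuous u) :
    costGLQ T B C K z v T₀ (γ • x₀) u
      = costGLQ T B C K z v T₀ x₀ u
        + ∫ t in (0:ℝ)..T₀, (2 * (⟪z, T t (γ • x₀)⟫).re - 2 * (⟪z, T t x₀⟫).re) := by
  have hΦ := continuousOn_inputMap T hTcont B hu T₀ hT₀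
  have htraj : ContinuousOn (traj T B x₀ u) (Icc 0 T₀) := by
    unfold traj; exact ((hTcont x₀).continuousOn).add hΦ
  have hf : IntervalIntegrable (fun t => ‖C (traj T B x₀ u t)‖ ^ 2 + ‖K (u t)‖ ^ 2
      + 2 * (⟪z, traj T B x₀ u t⟫).re + 2 * (⟪v, u t⟫).re) volume 0 T₀ := by
    apply ContinuousOn.intervalIntegrable
    rw [uIcc_of_le hT₀.le]
    have h1 : ContinuousOn (fun t => ‖C (traj T B x₀ u t)‖ ^ 2) (Icc 0 T₀) :=
      ((C.continuous.comp_continuousOn htraj).norm).pow 2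
    have h2 : ContinuousOn (fun t => ‖K (u t)‖ ^ 2) (Icc 0 T₀) :=
      (((K.continuous.comp hu).norm).pow 2).continuousOn
    have h3 : ContinuousOn (fun t => 2 * (⟪z, traj T B x₀ u t⟫).re) (Icc 0 T₀) :=
      continuousOn_const.mul (Complex.continuous_re.comp_continuousOn
        (continuousOn_const.inner htraj))
    have h4 : ContinuousOn (fun t => 2 * (⟪v, u t⟫).re) (Icc 0 T₀) :=
      (continuous_const.mul (Complex.continuous_re.comp
        (continuous_const.inner hu))).continuousOn
    exact ((h1.add h2).add h3).add h4
  have hg : IntervalIntegrable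
      (fun t => 2 * (⟪z, T t (γ • x₀)⟫).re - 2 * (⟪z, T t x₀⟫).re) volume 0 T₀ := by
    apply Continuous.intervalIntegrable
    exact (continuous_const.mul (Complex.continuous_re.comp
        (continuous_const.inner (hTcont (γ • x₀))))).sub
      (continuous_const.mul (Complex.continuous_re.comp
        (continuous_const.inner (hTcont x₀))))
  have key : EqOn (fun t => ‖C (traj T B (γ • x₀) u t)‖ ^ 2 + ‖K (u t)‖ ^ 2
        + 2 * (⟪z, traj T B (γ • x₀) u t⟫).re + 2 * (⟪v, u t⟫).re)
      (fun t => (‖C (traj T B x₀ u t)‖ ^ 2 + ‖K (u t)‖ ^ 2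
        + 2 * (⟪z, traj T B x₀ u t⟫).re + 2 * (⟪v, u t⟫).re)
        + (2 * (⟪z, T t (γ • x₀)⟫).re - 2 * (⟪z, T t x₀⟫).re)) (uIcc 0 T₀) := by
    intro t ht
    rw [uIcc_of_le hT₀.le] at ht
    have h0 : C (T t x₀) = 0 := hx₀ t ht.1
    have h0' : C (T t (γ • x₀)) = 0 := by
      rw [_root_.map_smul, _root_.map_smul, h0, smul_zero]
    simp only [traj, map_add, h0, h0', zero_add, inner_add_right, Complex.add_re]
    ring
  rw [costGLQ, costGLQ, intervalIntegral.integral_congr key,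
    intervalIntegral.integral_add hf hg]

/-- Lemma 4.1: if `x₀` is unobservable, then for any `γ ∈ ℂ` the output along any
trajectory started at `γ x₀` equals the output of the input map alone; hence the
(unique) optimal controls for initial conditions `γ x₀` and `x₀` coincide. -/
theorem stmt10
    (T : ℝ → H →L[ℂ] H)
    (hT0 : T 0 = ContinuousLinearMap.id ℂ H)
    (hTadd : ∀ s t : ℝ, 0 ≤ s → 0 ≤ t → T (s + t) = (T s).comp (T t))
    (hTcont : ∀ x : H, Continuous fun t : ℝ => T t x)
    (B : U →L[ℂ] H) (C : H →L[ℂ] Y) (K : U →L[ℂ] U) (z : H) (v : U)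
    (m : ℝ) (hm : 0 < m)
    (hcoer : ∀ u : U, m * ‖u‖ ^ 2 ≤ (⟪(K.adjoint.comp K) u, u⟫).re)
    (T₀ : ℝ) (hT₀ : 0 < T₀)
    (x₀ : H) (hx₀ : ∀ t : ℝ, 0 ≤ t → C (T t x₀) = 0) :
    (∀ (γ : ℂ) (u : ℝ → U) (t : ℝ), 0 ≤ t → t ≤ T₀ →
      ‖C (traj T B (γ • x₀) u t)‖ ^ 2 = ‖C (inputMap T B u t)‖ ^ 2) ∧
    (∀ (γ : ℂ) (u₁ u₂ : ℝ → U), Continuous u₁ → Continuous u₂ →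
      (∀ u : ℝ → U, Continuous u →
        costGLQ T B C K z v T₀ x₀ u₁ ≤ costGLQ T B C K z v T₀ x₀ u) →
      (∀ u : ℝ → U, Continuous u →
        costGLQ T B C K z v T₀ (γ • x₀) u₂ ≤ costGLQ T B C K z v T₀ (γ • x₀) u) →
      (∀ w w' : ℝ → U, Continuous w → Continuous w' →
        (∀ u : ℝ → U, Continuous u →
          costGLQ T B C K z v T₀ (γ • x₀) w ≤ costGLQ T B C K z v T₀ (γ • x₀) u) →
        (∀ u : ℝ → U, Continuous u →
          costGLQ T B C K z v T₀ (γ • x₀) w' ≤ costGLQ T B C K z v T₀ (γ • x₀) u) →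
        w = w') →
      u₁ = u₂) := by
  constructor
  · intro γ u t ht _
    have h0 : C (T t (γ • x₀)) = 0 := by rw [_root_.map_smul, _root_.map_smul, hx₀ t ht, smul_zero]
    rw [traj, map_add, h0, zero_add]
  · intro γ u₁ u₂ hu₁ hu₂ hopt₁ hopt₂ huniq
    refine huniq u₁ u₂ hu₁ hu₂ (fun u hu => ?_) hopt₂
    rw [costGLQ_smul_eq T hTcont B C K z v T₀ hT₀ x₀ hx₀ γ hu₁,
        costGLQ_smul_eq T hTcont B C K z v T₀ hT₀ x₀ hx₀ γ hu]
    linarith [hopt₁ u hu]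

end
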